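/- Let Δ ⊂ ℝ^4 be the root system of F_4 and H_1,…,H_4 the dual basis of the simple roots α_1,…,α_4. For nonempty I ⊆ {1,2,3,4} set ξ_I = Σ_{i∈I} H_i (these are exactly the symmetric canonical elements of F_4). Then the number of roots α ∈ Δ with ⟨α, ξ_I⟩ an odd integer equals 16 (= dim F_4/Spin(9), so that N_{ξ_I} is the Cayley plane 𝕆P² = F_4/Spin(9)) if and only if ξ_I ∈ {H_3, H_4, H_3+H_4}. Moreover, for ω* = α_1+2α_2+3α_3+2α_4 (the highest weight of the 26-dimensional representation of F_4, which is self-dual), the uniton numbers 2⟨ω*, ξ⟩ equal 4, 6 and 10 for ξ = H_4, H_3 and H_3+H_4 respectively. -/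

import Mathlib

set_option maxRecDepth 4000


/-- The Euclidean pairing on `ℝ^4`. -/
def dotR (v w : Fin 4 → ℝ) : ℝ := ∑ i, v i * w i

/-- Standard basis vector `e_i` of `ℝ^4`. -/
def stdE (i : Fin 4) : Fin 4 → ℝ := fun j => if j = i then 1 else 0

/-- The root system of `F_4` in `ℝ^4`:
`{±e_i} ∪ {±e_i ± e_j : i < j} ∪ {(±e_1±e_2±e_3±e_4)/2}` (48 roots). -/
def F4roots : Set (Fin 4 → ℝ) :=
  {v | ∃ (i : Fin 4) (ε : ℝ), (ε = 1 ∨ ε = -1) ∧ v = ε • stdE i} ∪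
  {v | ∃ (i j : Fin 4) (ε δ : ℝ), i < j ∧ (ε = 1 ∨ ε = -1) ∧ (δ = 1 ∨ δ = -1) ∧
    v = ε • stdE i + δ • stdE j} ∪
  {v | ∃ s : Fin 4 → ℝ, (∀ i, s i = 1 ∨ s i = -1) ∧ v = fun i => s i / 2}

/-- The simple roots of `F_4` (1-based index): `α₁ = e₂-e₃`, `α₂ = e₃-e₄`,
`α₃ = e₄`, `α₄ = (e₁-e₂-e₃-e₄)/2`. -/
noncomputable def alphaF4 : ℕ → Fin 4 → ℝ
  | 1 => ![0, 1, -1, 0]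
  | 2 => ![0, 0, 1, -1]
  | 3 => ![0, 0, 0, 1]
  | 4 => ![1/2, -1/2, -1/2, -1/2]
  | _ => 0

-- ## Auxiliary integer model of the (doubled) F₄ root system

def dotZ (v w : Fin 4 → ℤ) : ℤ := ∑ i, v i * w i

def sgnZ (b : Bool) : ℤ := if b then 1 else -1

def QA : Finset (Fin 4 → ℤ) :=
  Finset.image (fun p : Fin 4 × Bool => fun j => sgnZ p.2 * (if j = p.1 then 2 else 0)) Finset.univ

def QB : Finset (Fin 4 → ℤ) :=
  Finset.image (fun p : (Fin 4 × Fin 4) × Bool × Bool =>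
      fun j => sgnZ p.2.1 * (if j = p.1.1 then 2 else 0) + sgnZ p.2.2 * (if j = p.1.2 then 2 else 0))
    (Finset.univ.filter fun p => p.1.1 < p.1.2)

def QC : Finset (Fin 4 → ℤ) :=
  Finset.image (fun s : Fin 4 → Bool => fun j => sgnZ (s j)) Finset.univ

def QRoots : Finset (Fin 4 → ℤ) := QA ∪ QB ∪ QC

noncomputable def phiZ (w : Fin 4 → ℤ) : Fin 4 → ℝ := fun i => (w i : ℝ)

noncomputable def psiZ (v : Fin 4 → ℤ) : Fin 4 → ℝ := fun i => (v i : ℝ) / 2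

lemma sgnZ_cast (b : Bool) : ((sgnZ b : ℤ) : ℝ) = if b then 1 else -1 := by
  cases b <;> simp [sgnZ]

lemma memQA (i : Fin 4) (b : Bool) :
    (fun k => sgnZ b * (if k = i then 2 else 0)) ∈ (↑QRoots : Set (Fin 4 → ℤ)) := by
  simp only [QRoots, Finset.coe_union, Set.mem_union]
  exact Or.inl (Or.inl (Finset.mem_coe.2 (Finset.mem_image.2 ⟨(i, b), Finset.mem_univ _, rfl⟩)))

lemma memQB {i j : Fin 4} (hij : i < j) (b c : Bool) :
    (fun k => sgnZ b * (if k = i then 2 else 0) + sgnZ c * (if k = j then 2 else 0))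
      ∈ (↑QRoots : Set (Fin 4 → ℤ)) := by
  simp only [QRoots, Finset.coe_union, Set.mem_union]
  exact Or.inl (Or.inr (Finset.mem_coe.2 (Finset.mem_image.2
    ⟨((i, j), b, c), Finset.mem_filter.2 ⟨Finset.mem_univ _, hij⟩, rfl⟩)))

lemma memQC (s : Fin 4 → Bool) :
    (fun k => sgnZ (s k)) ∈ (↑QRoots : Set (Fin 4 → ℤ)) := by
  simp only [QRoots, Finset.coe_union, Set.mem_union]
  exact Or.inr (Finset.mem_coe.2 (Finset.mem_image.2 ⟨s, Finset.mem_univ _, rfl⟩))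

lemma roots_eq : F4roots = psiZ '' ↑QRoots := by
  ext v
  constructor
  · rintro ((⟨i, ε, hε, rfl⟩ | ⟨i, j, ε, δ, hij, hε, hδ, rfl⟩) | ⟨s, hs, rfl⟩)
    · rcases hε with rfl | rfl
      · refine ⟨_, memQA i true, ?_⟩
        funext k; simp only [psiZ, sgnZ, Pi.smul_apply, smul_eq_mul, stdE]
        split_ifs <;> (first | tauto | norm_num)
      · refine ⟨_, memQA i false, ?_⟩
        funext k; simp only [psiZ, sgnZ, Pi.smul_apply, smul_eq_mul, stdE]
        split_ifs <;> (first | tauto | norm_num)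
    · rcases hε with rfl | rfl <;> rcases hδ with rfl | rfl
      · refine ⟨_, memQB hij true true, ?_⟩
        funext k; simp only [psiZ, sgnZ, Pi.add_apply, Pi.smul_apply, smul_eq_mul, stdE]
        split <;> split_ifs <;> (first | tauto | norm_num)
      · refine ⟨_, memQB hij true false, ?_⟩
        funext k; simp only [psiZ, sgnZ, Pi.add_apply, Pi.smul_apply, smul_eq_mul, stdE]
        split <;> split_ifs <;> (first | tauto | norm_num)
      · refine ⟨_, memQB hij false true, ?_⟩
        funext k; simp only [psiZ, sgnZ, Pi.add_apply, Pi.smul_apply, smul_eq_mul, stdE]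
        split <;> split_ifs <;> (first | tauto | norm_num)
      · refine ⟨_, memQB hij false false, ?_⟩
        funext k; simp only [psiZ, sgnZ, Pi.add_apply, Pi.smul_apply, smul_eq_mul, stdE]
        split <;> split_ifs <;> (first | tauto | norm_num)
    · classical
      refine ⟨fun k => sgnZ (decide (s k = 1)), memQC _, ?_⟩
      funext k
      rcases hs k with h | h <;> simp only [psiZ, sgnZ_cast, h] <;> norm_num
  · rintro ⟨u, hu, rfl⟩
    rcases Finset.mem_union.1 (Finset.mem_coe.1 hu) with hu' | huC
    · rcases Finset.mem_union.1 hu' with huA | huB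
      · obtain ⟨⟨i, b⟩, -, rfl⟩ := Finset.mem_image.1 huA
        left; left
        refine ⟨i, if b then 1 else -1, by cases b <;> simp, ?_⟩
        funext k
        simp only [psiZ, Pi.smul_apply, smul_eq_mul, stdE]
        cases b <;> simp only [sgnZ] <;> push_cast <;> split_ifs <;> norm_num
      · obtain ⟨⟨⟨i, j⟩, b, c⟩, hij, rfl⟩ := Finset.mem_image.1 huB
        left; right
        refine ⟨i, j, if b then 1 else -1, if c then 1 else -1,
          (Finset.mem_filter.1 hij).2, by cases b <;> simp, by cases c <;> simp, ?_⟩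
        funext k
        simp only [psiZ, Pi.add_apply, Pi.smul_apply, smul_eq_mul, stdE]
        cases b <;> cases c <;> simp only [sgnZ] <;> push_cast <;> split_ifs <;> norm_num
    · obtain ⟨s, -, rfl⟩ := Finset.mem_image.1 huC
      right
      refine ⟨fun k => if s k then 1 else -1, fun k => by cases hsk : s k <;> simp [hsk], ?_⟩
      funext k
      simp only [psiZ]
      cases hsk : s k <;> norm_num [sgnZ, hsk]

lemma psiZ_inj : Function.Injective psiZ := by
  intro a b h; funext i
  have h1 := congrFun h i
  simp only [psiZ] at h1
  have h2 : ((a i : ℝ)) = (b i : ℝ) := by linarith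
  exact_mod_cast h2

lemma phiZ_inj : Function.Injective phiZ := by
  intro a b h; funext i
  have h1 := congrFun h i
  simp only [phiZ] at h1
  exact_mod_cast h1

lemma dot_psi_phi (v w : Fin 4 → ℤ) : dotR (psiZ v) (phiZ w) = (dotZ v w : ℝ) / 2 := by
  simp [dotR, dotZ, psiZ, phiZ, Fin.sum_univ_four]; push_cast; ring

lemma odd_half_iff (n : ℤ) : (∃ m : ℤ, Odd m ∧ (n : ℝ) / 2 = (m : ℝ)) ↔ n % 4 = 2 := by
  constructor
  · rintro ⟨m, ⟨k, rfl⟩, h⟩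
    have h2 : (n : ℝ) = ((2 * (2 * k + 1) : ℤ) : ℝ) := by push_cast at h ⊢; linarith
    have h3 : n = 2 * (2 * k + 1) := by exact_mod_cast h2
    omega
  · intro h
    refine ⟨2 * (n / 4) + 1, ⟨n / 4, by ring⟩, ?_⟩
    have h3 : n = 2 * (2 * (n / 4) + 1) := by omega
    conv_lhs => rw [h3]
    push_cast; ring

lemma main_count (w : Fin 4 → ℤ) :
    {α ∈ F4roots | ∃ m : ℤ, Odd m ∧ dotR α (phiZ w) = (m : ℝ)}.ncard
      = (QRoots.filter fun v => dotZ v w % 4 = 2).card := by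
  have himg : {α ∈ F4roots | ∃ m : ℤ, Odd m ∧ dotR α (phiZ w) = (m : ℝ)}
      = psiZ '' ↑(QRoots.filter fun v => dotZ v w % 4 = 2) := by
    rw [roots_eq]
    ext α
    simp only [Set.mem_setOf_eq, Set.mem_image, Finset.coe_filter, Finset.mem_coe]
    constructor
    · rintro ⟨⟨u, hu, rfl⟩, hm⟩
      rw [dot_psi_phi] at hm
      exact ⟨u, ⟨hu, (odd_half_iff _).1 hm⟩, rfl⟩
    · rintro ⟨u, ⟨hu, hmod⟩, rfl⟩
      exact ⟨⟨u, hu, rfl⟩, by rw [dot_psi_phi]; exact (odd_half_iff _).2 hmod⟩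
  rw [himg, Set.ncard_image_of_injective _ psiZ_inj, Set.ncard_coe_finset]

/-- For the dual basis `H_1,…,H_4` of the simple roots of `F_4`
and `ξ_I = Σ_{i∈I} H_i` (the symmetric canonical elements of `F_4`): the number of
roots pairing to an odd integer with `ξ_I` equals `16 = dim F₄/Spin(9)` iff
`ξ_I ∈ {H₃, H₄, H₃+H₄}`; and for `ω* = α₁+2α₂+3α₃+2α₄` the uniton numbers
`2⟨ω*, ξ⟩` are `4, 6, 10` for `ξ = H₄, H₃, H₃+H₄`. -/
theorem f4_cayley_plane (H : ℕ → Fin 4 → ℝ)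
    (hH : ∀ i ∈ Finset.Icc 1 4, ∀ j ∈ Finset.Icc 1 4,
      dotR (alphaF4 i) (H j) = if i = j then 1 else 0) :
    (∀ I : Finset ℕ, I ⊆ Finset.Icc 1 4 → I.Nonempty →
      (({α ∈ F4roots | ∃ m : ℤ, Odd m ∧ dotR α (∑ i ∈ I, H i) = m}.ncard = 16) ↔
        (∑ i ∈ I, H i) ∈ ({H 3, H 4, H 3 + H 4} : Set (Fin 4 → ℝ)))) ∧
    2 * dotR (alphaF4 1 + (2 : ℝ) • alphaF4 2 + (3 : ℝ) • alphaF4 3 +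
        (2 : ℝ) • alphaF4 4) (H 4) = 4 ∧
    2 * dotR (alphaF4 1 + (2 : ℝ) • alphaF4 2 + (3 : ℝ) • alphaF4 3 +
        (2 : ℝ) • alphaF4 4) (H 3) = 6 ∧
    2 * dotR (alphaF4 1 + (2 : ℝ) • alphaF4 2 + (3 : ℝ) • alphaF4 3 +
        (2 : ℝ) • alphaF4 4) (H 3 + H 4) = 10 := by
  classical
  have hH1 : H 1 = phiZ ![1,1,0,0] := by
    have e1 := hH 1 (by decide) 1 (by decide)
    have e2 := hH 2 (by decide) 1 (by decide)
    have e3 := hH 3 (by decide) 1 (by decide)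
    have e4 := hH 4 (by decide) 1 (by decide)
    norm_num [dotR, alphaF4, Fin.sum_univ_four, Matrix.cons_val_two, Matrix.cons_val_three] at e1 e2 e3 e4
    funext k; fin_cases k <;> simp [phiZ] <;> norm_num <;> linarith
  have hH2 : H 2 = phiZ ![2,1,1,0] := by
    have e1 := hH 1 (by decide) 2 (by decide)
    have e2 := hH 2 (by decide) 2 (by decide)
    have e3 := hH 3 (by decide) 2 (by decide)
    have e4 := hH 4 (by decide) 2 (by decide)
    norm_num [dotR, alphaF4, Fin.sum_univ_four, Matrix.cons_val_two, Matrix.cons_val_three] at e1 e2 e3 e4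
    funext k; fin_cases k <;> simp [phiZ] <;> norm_num <;> linarith
  have hH3 : H 3 = phiZ ![3,1,1,1] := by
    have e1 := hH 1 (by decide) 3 (by decide)
    have e2 := hH 2 (by decide) 3 (by decide)
    have e3 := hH 3 (by decide) 3 (by decide)
    have e4 := hH 4 (by decide) 3 (by decide)
    norm_num [dotR, alphaF4, Fin.sum_univ_four, Matrix.cons_val_two, Matrix.cons_val_three] at e1 e2 e3 e4
    funext k; fin_cases k <;> simp [phiZ] <;> norm_num <;> linarith
  have hH4 : H 4 = phiZ ![2,0,0,0] := by
    have e1 := hH 1 (by decide) 4 (by decide)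
    have e2 := hH 2 (by decide) 4 (by decide)
    have e3 := hH 3 (by decide) 4 (by decide)
    have e4 := hH 4 (by decide) 4 (by decide)
    norm_num [dotR, alphaF4, Fin.sum_univ_four, Matrix.cons_val_two, Matrix.cons_val_three] at e1 e2 e3 e4
    funext k; fin_cases k <;> simp [phiZ] <;> norm_num <;> linarith
  have hH34 : H 3 + H 4 = phiZ ![5,1,1,1] := by
    rw [hH3, hH4]; funext k; fin_cases k <;> simp [phiZ] <;> norm_num
  have hmem3 : ∀ w : Fin 4 → ℤ,
      ((phiZ w ∈ ({H 3, H 4, H 3 + H 4} : Set (Fin 4 → ℝ))) ↔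
        (w = ![3,1,1,1] ∨ w = ![2,0,0,0] ∨ w = ![5,1,1,1])) := by
    intro w
    rw [hH34, hH3, hH4]
    simp only [Set.mem_insert_iff, Set.mem_singleton_iff, phiZ_inj.eq_iff]
  refine ⟨?_, ?_, ?_, ?_⟩
  · intro I hI hne
    have hsum : ∑ i ∈ I, H i =
        (if 1 ∈ I then H 1 else 0) + ((if 2 ∈ I then H 2 else 0)
          + ((if 3 ∈ I then H 3 else 0) + (if 4 ∈ I then H 4 else 0))) := by
      have hI' : I = ({1, 2, 3, 4} : Finset ℕ).filter (· ∈ I) := by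
        ext x
        simp only [Finset.mem_filter, Finset.mem_insert, Finset.mem_singleton]
        constructor
        · intro hx
          have := hI hx
          simp only [Finset.mem_Icc] at this
          exact ⟨by omega, hx⟩
        · exact fun h => h.2
      conv_lhs => rw [hI']
      rw [Finset.sum_filter, Finset.sum_insert (by decide), Finset.sum_insert (by decide),
        Finset.sum_insert (by decide), Finset.sum_singleton]
    by_cases h1 : 1 ∈ I <;> by_cases h2 : 2 ∈ I <;> by_cases h3 : 3 ∈ I <;> by_cases h4 : 4 ∈ I
    · have hx : ∑ i ∈ I, H i = phiZ ![8,3,2,1] := by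
        rw [hsum]
        rw [if_pos h1]
        rw [if_pos h2]
        rw [if_pos h3]
        rw [if_pos h4]
        simp only [hH1, hH2, hH3, hH4]
        funext k; fin_cases k <;> simp [phiZ] <;> norm_num
      rw [hx, hmem3, main_count]
      decide
    · have hx : ∑ i ∈ I, H i = phiZ ![6,3,2,1] := by
        rw [hsum]
        rw [if_pos h1]
        rw [if_pos h2]
        rw [if_pos h3]
        rw [if_neg h4]
        simp only [hH1, hH2, hH3, hH4]
        funext k; fin_cases k <;> simp [phiZ] <;> norm_num
      rw [hx, hmem3, main_count]
      decide
    · have hx : ∑ i ∈ I, H i = phiZ ![5,2,1,0] := by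
        rw [hsum]
        rw [if_pos h1]
        rw [if_pos h2]
        rw [if_neg h3]
        rw [if_pos h4]
        simp only [hH1, hH2, hH3, hH4]
        funext k; fin_cases k <;> simp [phiZ] <;> norm_num
      rw [hx, hmem3, main_count]
      decide
    · have hx : ∑ i ∈ I, H i = phiZ ![3,2,1,0] := by
        rw [hsum]
        rw [if_pos h1]
        rw [if_pos h2]
        rw [if_neg h3]
        rw [if_neg h4]
        simp only [hH1, hH2, hH3, hH4]
        funext k; fin_cases k <;> simp [phiZ] <;> norm_num
      rw [hx, hmem3, main_count]
      decide
    · have hx : ∑ i ∈ I, H i = phiZ ![6,2,1,1] := by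
        rw [hsum]
        rw [if_pos h1]
        rw [if_neg h2]
        rw [if_pos h3]
        rw [if_pos h4]
        simp only [hH1, hH2, hH3, hH4]
        funext k; fin_cases k <;> simp [phiZ] <;> norm_num
      rw [hx, hmem3, main_count]
      decide
    · have hx : ∑ i ∈ I, H i = phiZ ![4,2,1,1] := by
        rw [hsum]
        rw [if_pos h1]
        rw [if_neg h2]
        rw [if_pos h3]
        rw [if_neg h4]
        simp only [hH1, hH2, hH3, hH4]
        funext k; fin_cases k <;> simp [phiZ] <;> norm_num
      rw [hx, hmem3, main_count]
      decide
    · have hx : ∑ i ∈ I, H i = phiZ ![3,1,0,0] := by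
        rw [hsum]
        rw [if_pos h1]
        rw [if_neg h2]
        rw [if_neg h3]
        rw [if_pos h4]
        simp only [hH1, hH2, hH3, hH4]
        funext k; fin_cases k <;> simp [phiZ] <;> norm_num
      rw [hx, hmem3, main_count]
      decide
    · have hx : ∑ i ∈ I, H i = phiZ ![1,1,0,0] := by
        rw [hsum]
        rw [if_pos h1]
        rw [if_neg h2]
        rw [if_neg h3]
        rw [if_neg h4]
        simp only [hH1, hH2, hH3, hH4]
        funext k; fin_cases k <;> simp [phiZ] <;> norm_num
      rw [hx, hmem3, main_count]
      decide
    · have hx : ∑ i ∈ I, H i = phiZ ![7,2,2,1] := by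
        rw [hsum]
        rw [if_neg h1]
        rw [if_pos h2]
        rw [if_pos h3]
        rw [if_pos h4]
        simp only [hH1, hH2, hH3, hH4]
        funext k; fin_cases k <;> simp [phiZ] <;> norm_num
      rw [hx, hmem3, main_count]
      decide
    · have hx : ∑ i ∈ I, H i = phiZ ![5,2,2,1] := by
        rw [hsum]
        rw [if_neg h1]
        rw [if_pos h2]
        rw [if_pos h3]
        rw [if_neg h4]
        simp only [hH1, hH2, hH3, hH4]
        funext k; fin_cases k <;> simp [phiZ] <;> norm_num
      rw [hx, hmem3, main_count]
      decide
    · have hx : ∑ i ∈ I, H i = phiZ ![4,1,1,0] := by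
        rw [hsum]
        rw [if_neg h1]
        rw [if_pos h2]
        rw [if_neg h3]
        rw [if_pos h4]
        simp only [hH1, hH2, hH3, hH4]
        funext k; fin_cases k <;> simp [phiZ] <;> norm_num
      rw [hx, hmem3, main_count]
      decide
    · have hx : ∑ i ∈ I, H i = phiZ ![2,1,1,0] := by
        rw [hsum]
        rw [if_neg h1]
        rw [if_pos h2]
        rw [if_neg h3]
        rw [if_neg h4]
        simp only [hH1, hH2, hH3, hH4]
        funext k; fin_cases k <;> simp [phiZ] <;> norm_num
      rw [hx, hmem3, main_count]
      decide
    · have hx : ∑ i ∈ I, H i = phiZ ![5,1,1,1] := by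
        rw [hsum]
        rw [if_neg h1]
        rw [if_neg h2]
        rw [if_pos h3]
        rw [if_pos h4]
        simp only [hH1, hH2, hH3, hH4]
        funext k; fin_cases k <;> simp [phiZ] <;> norm_num
      rw [hx, hmem3, main_count]
      decide
    · have hx : ∑ i ∈ I, H i = phiZ ![3,1,1,1] := by
        rw [hsum]
        rw [if_neg h1]
        rw [if_neg h2]
        rw [if_pos h3]
        rw [if_neg h4]
        simp only [hH1, hH2, hH3, hH4]
        funext k; fin_cases k <;> simp [phiZ] <;> norm_num
      rw [hx, hmem3, main_count]
      decide
    · have hx : ∑ i ∈ I, H i = phiZ ![2,0,0,0] := by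
        rw [hsum]
        rw [if_neg h1]
        rw [if_neg h2]
        rw [if_neg h3]
        rw [if_pos h4]
        simp only [hH1, hH2, hH3, hH4]
        funext k; fin_cases k <;> simp [phiZ] <;> norm_num
      rw [hx, hmem3, main_count]
      decide
    · exfalso
      obtain ⟨x, hx⟩ := hne
      have hx4 := hI hx
      simp only [Finset.mem_Icc] at hx4
      obtain ⟨hl, hr⟩ := hx4
      interval_cases x <;> [exact h1 hx; exact h2 hx; exact h3 hx; exact h4 hx]
  · rw [hH4]
    norm_num [dotR, alphaF4, phiZ, Fin.sum_univ_four, Matrix.cons_val_two, Matrix.cons_val_three]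
  · rw [hH3]
    norm_num [dotR, alphaF4, phiZ, Fin.sum_univ_four, Matrix.cons_val_two, Matrix.cons_val_three]
  · rw [hH34]
    norm_num [dotR, alphaF4, phiZ, Fin.sum_univ_four, Matrix.cons_val_two, Matrix.cons_val_three]
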